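/- Random-coding positive exponent: if R < I(X;Y) (mutual information under joint pmf Q(x)W(y|x)) then there exists ρ* ∈ (0, 1] such that E₀(ρ*, Q, W) − ρ* R > 0, where E₀ is the Gallager function. -/

import Mathlib

open Finset
open Real Filter Set Topology

/-- The Gallager function (natural logarithm). -/
noncomputable def gallagerE0 {X Y : Type*} [Fintype X] [Fintype Y]
    (Q : X → ℝ) (W : X → Y → ℝ) (ρ : ℝ) : ℝ :=
  -Real.log (∑ y : Y, (∑ x : X, Q x * W x y ^ (1 / (1 + ρ))) ^ (1 + ρ))

/-- Mutual information `I(X;Y)` under the joint pmf `Q(x)W(y|x)` (natural logarithm). -/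
noncomputable def mutInfo {X Y : Type*} [Fintype X] [Fintype Y]
    (Q : X → ℝ) (W : X → Y → ℝ) : ℝ :=
  ∑ x : X, ∑ y : Y, Q x * W x y * Real.log (W x y / ∑ x' : X, Q x' * W x' y)

/-- Random-coding positive exponent: if `R < I(X;Y)` then there is `ρ* ∈ (0,1]` with
`E₀(ρ*, Q, W) − ρ*·R > 0`. -/
theorem exists_positive_exponent {X Y : Type*} [Fintype X] [Fintype Y]
    (Q : X → ℝ) (hQ : ∀ x, 0 ≤ Q x) (hQsum : ∑ x, Q x = 1)
    (W : X → Y → ℝ) (hW : ∀ x y, 0 < W x y) (hWsum : ∀ x, ∑ y, W x y = 1)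
    (R : ℝ) (hR : R < mutInfo Q W) :
    ∃ ρ : ℝ, 0 < ρ ∧ ρ ≤ 1 ∧ 0 < gallagerE0 Q W ρ - ρ * R := by
  classical
  obtain ⟨x0, hx0⟩ : ∃ x, 0 < Q x := by
    by_contra h
    push_neg at h
    have h0 : ∑ x, Q x = 0 := Finset.sum_eq_zero fun x _ => le_antisymm (h x) (hQ x)
    rw [h0] at hQsum; norm_num at hQsum
  have hSpos : ∀ (y : Y) (ρ : ℝ), 0 < ∑ x, Q x * W x y ^ (1 / (1 + ρ)) := by
    intro y ρ
    exact Finset.sum_pos' (fun x _ => mul_nonneg (hQ x) (Real.rpow_pos_of_pos (hW x y) _).le)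
      ⟨x0, Finset.mem_univ x0, mul_pos hx0 (Real.rpow_pos_of_pos (hW x0 y) _)⟩
  have hP : ∀ y, 0 < ∑ x, Q x * W x y := by
    intro y
    exact Finset.sum_pos' (fun x _ => mul_nonneg (hQ x) (hW x y).le)
      ⟨x0, Finset.mem_univ x0, mul_pos hx0 (hW x0 y)⟩
  have hPsum : ∑ y, ∑ x, Q x * W x y = 1 := by
    rw [Finset.sum_comm]
    simp only [← Finset.mul_sum, hWsum, mul_one, hQsum]
  -- rewrite gallagerE0 in exp form
  have key : ∀ ρ : ℝ, gallagerE0 Q W ρ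
      = -Real.log (∑ y, Real.exp (Real.log (∑ x, Q x * W x y ^ (1 / (1 + ρ))) * (1 + ρ))) := by
    intro ρ
    unfold gallagerE0
    congr 2
    exact Finset.sum_congr rfl fun y _ => Real.rpow_def_of_pos (hSpos y ρ) _
  -- value of the inner sum at ρ = 0
  have hS0 : ∀ y : Y, (∑ x, Q x * W x y ^ (1 / (1 + (0:ℝ)))) = ∑ x, Q x * W x y := by
    intro y; norm_num [Real.rpow_one]
  -- per-y derivative
  have hy : ∀ y : Y, HasDerivAt
      (fun ρ : ℝ => Real.exp (Real.log (∑ x, Q x * W x y ^ (1 / (1 + ρ))) * (1 + ρ)))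
      ((∑ x, Q x * W x y) * Real.log (∑ x, Q x * W x y)
        - ∑ x, Q x * (W x y * Real.log (W x y))) 0 := by
    intro y
    have hu : HasDerivAt (fun ρ : ℝ => 1 / (1 + ρ)) (-1) 0 := by
      simpa [one_div] using ((hasDerivAt_id (0:ℝ)).const_add 1).fun_inv (by norm_num)
    have hc : ∀ x : X, HasDerivAt (fun ρ : ℝ => W x y ^ (1 / (1 + ρ)))
        (-(W x y * Real.log (W x y))) 0 := by
      intro x
      have h := (Real.hasStrictDerivAt_const_rpow (hW x y) (1/(1+(0:ℝ)))).hasDerivAt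
      simpa [Function.comp_def, Real.rpow_one] using h.comp 0 hu
    have hS : HasDerivAt (fun ρ : ℝ => ∑ x, Q x * W x y ^ (1 / (1 + ρ)))
        (∑ x, Q x * -(W x y * Real.log (W x y))) 0 :=
      HasDerivAt.fun_sum fun x _ => (hc x).const_mul (Q x)
    have hlog := hS.log (by rw [hS0 y]; exact (hP y).ne')
    have hmul := hlog.fun_mul ((hasDerivAt_id' (x := (0:ℝ))).const_add 1)
    have hexp := hmul.exp
    convert hexp using 1
    rw [hS0 y]
    simp only [id_eq, add_zero, mul_one, mul_neg, Finset.sum_neg_distrib]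
    rw [Real.exp_log (hP y)]
    field_simp [(hP y).ne']
    ring
  have hg : HasDerivAt
      (fun ρ : ℝ => ∑ y, Real.exp (Real.log (∑ x, Q x * W x y ^ (1 / (1 + ρ))) * (1 + ρ)))
      (∑ y, ((∑ x, Q x * W x y) * Real.log (∑ x, Q x * W x y)
        - ∑ x, Q x * (W x y * Real.log (W x y)))) 0 :=
    HasDerivAt.fun_sum fun y _ => hy y
  have hg0 : (∑ y, Real.exp (Real.log (∑ x, Q x * W x y ^ (1 / (1 + (0:ℝ)))) * (1 + (0:ℝ)))) = 1 := by
    have h : ∀ y : Y, Real.exp (Real.log (∑ x, Q x * W x y ^ (1 / (1 + (0:ℝ)))) * (1 + (0:ℝ)))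
        = ∑ x, Q x * W x y := by
      intro y; rw [hS0 y]; simp [Real.exp_log (hP y)]
    rw [Finset.sum_congr rfl fun y _ => h y, hPsum]
  have hmi : mutInfo Q W = -∑ y, ((∑ x, Q x * W x y) * Real.log (∑ x, Q x * W x y)
      - ∑ x, Q x * (W x y * Real.log (W x y))) := by
    unfold mutInfo
    rw [Finset.sum_comm, ← Finset.sum_neg_distrib]
    refine Finset.sum_congr rfl fun y _ => ?_
    have h : ∀ x : X, Q x * W x y * Real.log (W x y / ∑ x', Q x' * W x' y)
        = Q x * (W x y * Real.log (W x y)) - Q x * W x y * Real.log (∑ x', Q x' * W x' y) := by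
      intro x
      rw [Real.log_div (hW x y).ne' (hP y).ne']
      ring
    rw [Finset.sum_congr rfl fun x _ => h x, Finset.sum_sub_distrib, ← Finset.sum_mul]
    ring
  have h1 : HasDerivAt (gallagerE0 Q W) (mutInfo Q W) 0 := by
    have hlg := hg.log (by rw [hg0]; norm_num)
    have h2 := hlg.fun_neg
    have heq : (fun ρ : ℝ => -Real.log (∑ y, Real.exp
        (Real.log (∑ x, Q x * W x y ^ (1 / (1 + ρ))) * (1 + ρ)))) = gallagerE0 Q W := by
      funext ρ; rw [key ρ]
    rw [heq] at h2
    refine h2.congr_deriv ?_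
    rw [hg0, hmi, div_one]
  have hE : HasDerivAt (fun ρ => gallagerE0 Q W ρ - ρ * R) (mutInfo Q W - R) 0 := by
    simpa using h1.fun_sub ((hasDerivAt_id' (x := (0:ℝ))).mul_const R)
  have hf0 : gallagerE0 Q W 0 - 0 * R = 0 := by
    rw [key 0, hg0]; simp
  have hst := hasDerivAt_iff_tendsto_slope.mp hE
  have h2 : Tendsto (slope (fun ρ => gallagerE0 Q W ρ - ρ * R) 0) (𝓝[>] 0)
      (𝓝 (mutInfo Q W - R)) :=
    hst.mono_left (nhdsWithin_mono 0 fun x hx =>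
      Set.mem_compl_singleton_iff.mpr (ne_of_gt hx))
  have h3 : ∀ᶠ ρ in 𝓝[>] (0:ℝ), 0 < slope (fun ρ => gallagerE0 Q W ρ - ρ * R) 0 ρ :=
    h2.eventually (eventually_gt_nhds (by linarith))
  have h4 : ∀ᶠ ρ in 𝓝[>] (0:ℝ), ρ ∈ Set.Ioc (0:ℝ) 1 :=
    Filter.eventually_of_mem (Ioc_mem_nhdsGT one_pos) fun x hx => hx
  obtain ⟨ρ, hρs, hρm⟩ := (h3.and h4).exists
  refine ⟨ρ, hρm.1, hρm.2, ?_⟩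
  rw [slope_def_field, hf0, sub_zero, sub_zero] at hρs
  have h5 := mul_pos hρs hρm.1
  rwa [div_mul_cancel₀ _ (ne_of_gt hρm.1)] at h5
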